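/- Let $\Omega\subseteq\mathbb{R}^2$ be open, $h:\Omega\to\mathbb{R}$ be $C^2$, and suppose $e(x)=(\nabla h(x), e_3(x))$ is a $C^1$ field on $\Omega$ with $|e(x)|=1$. Let $\tilde C$ be a constant, set $\lambda(x) = \tilde C - h(x)$, and define $g(x) = (x,0) + \lambda(x)\,e(x)$. Then for all $x\in\Omega$ and $i=1,2$, $\dfrac{\partial g}{\partial x_i}(x)\cdot e(x) = 0$; that is, the surface parametrized by $g$ is orthogonal to the field $e$. -/

import Mathlib

noncomputable section

/-- Euclidean inner product in `ℝ³`. -/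
def dot3 (x y : Fin 3 → ℝ) : ℝ := x 0 * y 0 + x 1 * y 1 + x 2 * y 2

/-- Euclidean norm in `ℝ³`. -/
def norm3 (x : Fin 3 → ℝ) : ℝ := Real.sqrt (dot3 x x)

/-- Euclidean inner product in `ℝ²`. -/
def dot2 (x y : Fin 2 → ℝ) : ℝ := x 0 * y 0 + x 1 * y 1

/-- Euclidean norm in `ℝ²`. -/
def norm2 (x : Fin 2 → ℝ) : ℝ := Real.sqrt (dot2 x x)

/-- The embedding `x = (x₁,x₂) ↦ (x₁,x₂,0)` of the source plane into `ℝ³`. -/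
def lift2 (x : Fin 2 → ℝ) : Fin 3 → ℝ := ![x 0, x 1, 0]

/-- Cross product in `ℝ³`. -/
def cross3 (x y : Fin 3 → ℝ) : Fin 3 → ℝ :=
  ![x 1 * y 2 - x 2 * y 1, x 2 * y 0 - x 0 * y 2, x 0 * y 1 - x 1 * y 0]

/-- Partial derivative `∂f/∂xᵢ` of a scalar function on `ℝ²`. -/
def pd (i : Fin 2) (f : (Fin 2 → ℝ) → ℝ) (x : Fin 2 → ℝ) : ℝ :=
  fderiv ℝ f x (Pi.single i 1)

/-- Gradient of a scalar function on `ℝ²`. -/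
def grad2 (f : (Fin 2 → ℝ) → ℝ) (x : Fin 2 → ℝ) : Fin 2 → ℝ :=
  ![pd 0 f x, pd 1 f x]

/-- Two-dimensional curl of a plane field: `curl V = ∂V₂/∂x₁ - ∂V₁/∂x₂`. -/
def curl2 (V : (Fin 2 → ℝ) → (Fin 2 → ℝ)) (x : Fin 2 → ℝ) : ℝ :=
  pd 0 (fun y => V y 1) x - pd 1 (fun y => V y 0) x

/-- Two-dimensional cross product `a × b = a₁b₂ - a₂b₁`. -/
def cross2v (a b : Fin 2 → ℝ) : ℝ := a 0 * b 1 - a 1 * b 0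

end

/-- The surface `g(x) = (x,0) + (C̃ - h(x)) e(x)` is orthogonal to the
unit field `e(x) = (∇h(x), e₃(x))`. -/
theorem orthogonal_surface_to_field
    (Ω : Set (Fin 2 → ℝ)) (hΩ : IsOpen Ω)
    (h : (Fin 2 → ℝ) → ℝ) (hh : ContDiffOn ℝ 2 h Ω)
    (e : (Fin 2 → ℝ) → (Fin 3 → ℝ)) (he : ContDiffOn ℝ 1 e Ω)
    (hgrad : ∀ x ∈ Ω, e x 0 = pd 0 h x ∧ e x 1 = pd 1 h x)
    (heunit : ∀ x ∈ Ω, norm3 (e x) = 1)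
    (Ct : ℝ)
    (g : (Fin 2 → ℝ) → (Fin 3 → ℝ)) (hg : ∀ x, g x = lift2 x + (Ct - h x) • e x) :
    ∀ x ∈ Ω, ∀ i : Fin 2, dot3 (fderiv ℝ g x (Pi.single i 1)) (e x) = 0 := by
  intro x hx i
  have hxU : Ω ∈ nhds x := hΩ.mem_nhds hx
  have hdh : DifferentiableAt ℝ h x :=
    ((hh.contDiffAt hxU).of_le (m := 1) (by norm_num)).differentiableAt one_ne_zero
  have hde : DifferentiableAt ℝ e x := (he.contDiffAt hxU).differentiableAt one_ne_zero
  have hdej : ∀ j : Fin 3, DifferentiableAt ℝ (fun y => e y j) x :=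
    fun j => differentiableAt_pi.mp hde j
  set v : Fin 2 → ℝ := Pi.single i 1 with hv
  set ψ : (Fin 2 → ℝ) →L[ℝ] ℝ := fderiv ℝ h x with hψ
  set φ : Fin 3 → ((Fin 2 → ℝ) →L[ℝ] ℝ) := fun j => fderiv ℝ (fun y => e y j) x with hφ
  set P0 : (Fin 2 → ℝ) →L[ℝ] ℝ := ContinuousLinearMap.proj 0 with hP0
  set P1 : (Fin 2 → ℝ) →L[ℝ] ℝ := ContinuousLinearMap.proj 1 with hP1
  -- derivative of λ = Ct - h
  have hlam : HasFDerivAt (fun y => Ct - h y) (-ψ) x := by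
    simpa [Pi.sub_def] using (hasFDerivAt_const Ct x).sub hdh.hasFDerivAt
  -- component derivatives of g
  set Dj : Fin 3 → ((Fin 2 → ℝ) →L[ℝ] ℝ) :=
    ![P0 + ((Ct - h x) • φ 0 + (e x 0) • (-ψ)),
      P1 + ((Ct - h x) • φ 1 + (e x 1) • (-ψ)),
      (Ct - h x) • φ 2 + (e x 2) • (-ψ)] with hDj
  set D : (Fin 2 → ℝ) →L[ℝ] (Fin 3 → ℝ) := ContinuousLinearMap.pi Dj with hD
  have hgD : HasFDerivAt g D x := by
    rw [hasFDerivAt_pi']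
    intro j
    have hgj : (fun y => g y j) = fun y => lift2 y j + (Ct - h y) * e y j := by
      funext y; rw [hg]; simp
    have hproj : (ContinuousLinearMap.proj j).comp D = Dj j := by
      ext w; simp [hD]
    rw [hproj, hgj]
    fin_cases j
    · have h1 : HasFDerivAt (fun y : Fin 2 → ℝ => y 0) P0 x := by
        have := P0.hasFDerivAt (x := x)
        exact this
      have := h1.add (hlam.mul (hdej 0).hasFDerivAt)
      simpa [lift2, hDj, hφ, Pi.add_def, Pi.mul_def] using this
    · have h1 : HasFDerivAt (fun y : Fin 2 → ℝ => y 1) P1 x := by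
        have := P1.hasFDerivAt (x := x)
        exact this
      have := h1.add (hlam.mul (hdej 1).hasFDerivAt)
      simpa [lift2, hDj, hφ, Pi.add_def, Pi.mul_def] using this
    · have := hlam.mul (hdej 2).hasFDerivAt
      simpa [lift2, hDj, hφ, Pi.add_def, Pi.mul_def] using this
  have hfd : fderiv ℝ g x = D := hgD.fderiv
  -- unit field: dot3 (e y) (e y) = 1 on Ω
  have hunit : ∀ y ∈ Ω, dot3 (e y) (e y) = 1 := by
    intro y hy
    have h1 := heunit y hy
    rw [norm3, Real.sqrt_eq_one] at h1
    exact h1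
  -- derivative of dot3 e e is zero
  have hsq : HasFDerivAt (fun y => e y 0 * e y 0 + e y 1 * e y 1 + e y 2 * e y 2)
      ((e x 0 • φ 0 + e x 0 • φ 0) + (e x 1 • φ 1 + e x 1 • φ 1)
        + (e x 2 • φ 2 + e x 2 • φ 2)) x :=
    (((hdej 0).hasFDerivAt.mul (hdej 0).hasFDerivAt).add
      ((hdej 1).hasFDerivAt.mul (hdej 1).hasFDerivAt)).add
      ((hdej 2).hasFDerivAt.mul (hdej 2).hasFDerivAt)
  have hconst : HasFDerivAt (fun y => e y 0 * e y 0 + e y 1 * e y 1 + e y 2 * e y 2)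
      (0 : (Fin 2 → ℝ) →L[ℝ] ℝ) x := by
    apply (hasFDerivAt_const (1 : ℝ) x).congr_of_eventuallyEq
    filter_upwards [hxU] with y hy
    have := hunit y hy
    rw [dot3] at this
    linarith
  have hzero : e x 0 * φ 0 v + e x 1 * φ 1 v + e x 2 * φ 2 v = 0 := by
    have heq := hsq.unique hconst
    have h2 := congrArg (fun L : (Fin 2 → ℝ) →L[ℝ] ℝ => L v) heq
    simp only [ContinuousLinearMap.add_apply, ContinuousLinearMap.smul_apply,
      ContinuousLinearMap.zero_apply, smul_eq_mul] at h2
    linarith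
  -- gradient conditions
  have hg0 : e x 0 = ψ (Pi.single 0 1) := (hgrad x hx).1
  have hg1 : e x 1 = ψ (Pi.single 1 1) := (hgrad x hx).2
  have hu := hunit x hx
  rw [dot3] at hu
  -- evaluate the components of D v
  have hDv0 : D v 0 = v 0 + ((Ct - h x) * φ 0 v - e x 0 * ψ v) := by
    show Dj 0 v = _
    simp [hDj, hP0]
    ring
  have hDv1 : D v 1 = v 1 + ((Ct - h x) * φ 1 v - e x 1 * ψ v) := by
    show Dj 1 v = _
    simp [hDj, hP1]
    ring
  have hDv2 : D v 2 = (Ct - h x) * φ 2 v - e x 2 * ψ v := by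
    show Dj 2 v = _
    simp [hDj]
    ring
  have hkey : v 0 * e x 0 + v 1 * e x 1 = ψ v := by
    clear_value v
    fin_cases i
    · have hi : v = Pi.single (0 : Fin 2) 1 := by rw [hv]; norm_num
      rw [hi, ← hg0]
      simp [Pi.single_eq_of_ne]
    · have hi : v = Pi.single (1 : Fin 2) 1 := by rw [hv]; norm_num
      rw [hi, ← hg1]
      simp [Pi.single_eq_of_ne]
  rw [hfd, dot3, hDv0, hDv1, hDv2]
  linear_combination hkey + (Ct - h x) * hzero - ψ v * hu
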